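/- arXiv:1602.08028 — 2 statements merged into one kernel-verified Lean document; each statement's English description precedes it below -/
import Mathlib

section
/- The limit as n → ∞ of the real numbers a(2^n − 1) equals (√5 − 1)/2, the reciprocal of the golden ratio. -/
open Real goldenRatio Filter

private lemma fib_key (a : ℕ → ℚ) (h1 : a 1 = 1)
    (h2 : ∀ n : ℕ, 1 ≤ n → a (2 * n) = a n + 1)
    (h3 : ∀ n : ℕ, 1 ≤ n → a (2 * n + 1) = 1 / a (2 * n)) :
    ∀ n : ℕ, 1 ≤ n → a (2 ^ n - 1) = (Nat.fib n : ℚ) / (Nat.fib (n + 1) : ℚ) := by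
  intro n hn
  induction n with
  | zero => omega
  | succ m ih =>
    rcases Nat.eq_or_lt_of_le hn with h | h
    · simp [← h, h1]
    · have hm : 1 ≤ m := by omega
      have hpow : 2 ^ (m + 1) - 1 = 2 * (2 ^ m - 1) + 1 := by
        have : 1 ≤ 2 ^ m := Nat.one_le_two_pow
        ring_nf
        omega
      have hge : 1 ≤ 2 ^ m - 1 := by
        have : 2 ≤ 2 ^ m := by
          calc 2 = 2 ^ 1 := rfl
          _ ≤ 2 ^ m := Nat.pow_le_pow_right (by norm_num) hm
        omega
      have hfib : (0 : ℚ) < (Nat.fib (m + 1) : ℚ) := by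
        exact_mod_cast Nat.fib_pos.2 (by omega)
      have hfib2 : (0 : ℚ) < (Nat.fib (m + 2) : ℚ) := by
        exact_mod_cast Nat.fib_pos.2 (by omega)
      rw [hpow, h3 _ hge, h2 _ hge, ih hm, Nat.fib_add_two]
      push_cast
      rw [div_add' _ _ _ (ne_of_gt hfib)]
      rw [one_div_div]
      congr 1
      ring

theorem stmt11 (a : ℕ → ℚ) (h1 : a 1 = 1)
    (h2 : ∀ n : ℕ, 1 ≤ n → a (2 * n) = a n + 1)
    (h3 : ∀ n : ℕ, 1 ≤ n → a (2 * n + 1) = 1 / a (2 * n)) :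
    Filter.Tendsto (fun n : ℕ => ((a (2 ^ n - 1) : ℚ) : ℝ)) Filter.atTop
      (nhds ((Real.sqrt 5 - 1) / 2)) := by
  set r : ℝ := ψ / φ with hr
  have hphi : (0 : ℝ) < φ := goldenRatio_pos
  have habs : |r| < 1 := by
    rw [hr, abs_div, abs_of_pos hphi, div_lt_one hphi]
    have h1 : |ψ| < 1 := abs_lt.2 ⟨neg_one_lt_goldenConj, lt_trans goldenConj_neg one_pos⟩
    linarith [one_lt_goldenRatio]
  have hrlim : Tendsto (fun n : ℕ => r ^ n) atTop (nhds 0) :=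
    tendsto_pow_atTop_nhds_zero_of_abs_lt_one habs
  -- g n limit
  have hg : Tendsto (fun n : ℕ => (1 - r ^ n) / (φ - ψ * r ^ n)) atTop
      (nhds ((Real.sqrt 5 - 1) / 2)) := by
    have hlim : Tendsto (fun n : ℕ => (1 - r ^ n) / (φ - ψ * r ^ n)) atTop
        (nhds ((1 - 0) / (φ - ψ * 0))) := by
      apply Filter.Tendsto.div
      · exact (tendsto_const_nhds.sub hrlim)
      · exact (tendsto_const_nhds.sub (tendsto_const_nhds.mul hrlim))
      · simpa using goldenRatio_ne_zero
    convert hlim using 2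
    rw [mul_zero, sub_zero, sub_zero]
    rw [eq_div_iff goldenRatio_ne_zero]
    show (√5 - 1) / 2 * ((1 + √5)/2) = 1
    have h5 : √5 * √5 = 5 := Real.mul_self_sqrt (by norm_num)
    nlinarith [h5]
  apply hg.congr'
  rw [Filter.EventuallyEq, eventually_atTop]
  refine ⟨1, fun n hn => ?_⟩
  rw [fib_key a h1 h2 h3 n hn]
  push_cast
  rw [Real.coe_fib_eq, Real.coe_fib_eq, hr]
  have h5 : (0:ℝ) < √5 := Real.sqrt_pos.2 (by norm_num)
  have h5' : (√5 : ℝ) ≠ 0 := ne_of_gt h5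
  have hfib2 : (0 : ℝ) < (Nat.fib (n + 1) : ℝ) := by
    exact_mod_cast Nat.fib_pos.2 (by omega)
  have hcoe := Real.coe_fib_eq (n+1)
  have hpne : (φ:ℝ) ≠ 0 := goldenRatio_ne_zero
  generalize hP : (φ:ℝ) = p at hcoe hpne ⊢
  generalize hQ : (ψ:ℝ) = q at hcoe ⊢
  have hphin : p ^ n ≠ 0 := pow_ne_zero _ hpne
  have hden : p ^ (n+1) - q ^ (n+1) ≠ 0 := by
    intro h
    rw [h] at hcoe
    simp at hcoe
  have hden2 : p - q * (q / p) ^ n ≠ 0 := by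
    have heq : p - q * (q / p) ^ n = (p ^ (n+1) - q ^ (n+1)) / p ^ n := by
      rw [div_pow]; field_simp
      ring
    rw [heq]
    exact div_ne_zero hden hphin
  rw [div_eq_div_iff hden2 (div_ne_zero hden h5')]
  rw [div_pow]; field_simp
  ring
end

section
/- The set of positive rational numbers is countably infinite, via the explicit bijection n ↦ a(n) from ℕ≥1. -/
section
variable (a : ℕ → ℚ) (h1 : a 1 = 1)
    (h2 : ∀ n : ℕ, 1 ≤ n → a (2 * n) = a n + 1)
    (h3 : ∀ n : ℕ, 1 ≤ n → a (2 * n + 1) = 1 / a (2 * n))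

include h1 h2 h3 in
lemma apos : ∀ n : ℕ, 1 ≤ n → 0 < a n := by
  intro n
  induction n using Nat.strong_induction_on with
  | _ n ih =>
    intro hn
    match n, hn with
    | 1, _ => rw [h1]; norm_num
    | (m+2), _ =>
      rcases Nat.even_or_odd (m+2) with ⟨k, hk⟩ | ⟨k, hk⟩
      · have hk1 : 1 ≤ k := by omega
        have : m + 2 = 2 * k := by omega
        rw [this, h2 k hk1]
        have := ih k (by omega) hk1
        linarith
      · have hk1 : 1 ≤ k := by omega
        rw [hk, h3 k hk1, h2 k hk1]
        have := ih k (by omega) hk1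
        positivity

include h1 h2 h3 in
lemma agt : ∀ k : ℕ, 1 ≤ k → 1 < a (2 * k) := by
  intro k hk
  rw [h2 k hk]
  have := apos a h1 h2 h3 k hk
  linarith

include h1 h2 h3 in
lemma alt : ∀ k : ℕ, 1 ≤ k → a (2 * k + 1) < 1 := by
  intro k hk
  rw [h3 k hk]
  have := agt a h1 h2 h3 k hk
  rw [div_lt_one (by linarith)]
  linarith

include h1 h2 h3 in
lemma ainj : ∀ n : ℕ, 1 ≤ n → ∀ m : ℕ, 1 ≤ m → a n = a m → n = m := by
  intro n
  induction n using Nat.strong_induction_on with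
  | _ n ih =>
    intro hn m hm heq
    match n, hn with
    | 1, _ =>
      match m, hm with
      | 1, _ => rfl
      | (m+2), _ =>
        exfalso
        rcases Nat.even_or_odd (m+2) with ⟨k, hk⟩ | ⟨k, hk⟩
        · have hk1 : 1 ≤ k := by omega
          have h2k : m + 2 = 2 * k := by omega
          have := agt a h1 h2 h3 k hk1
          rw [← h2k, ← heq, h1] at this; linarith
        · have hk1 : 1 ≤ k := by omega
          have := alt a h1 h2 h3 k hk1
          rw [← hk, ← heq, h1] at this; linarith
    | (n+2), _ =>
      rcases Nat.even_or_odd (n+2) with ⟨j, hj⟩ | ⟨j, hj⟩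
      · -- n+2 = 2j, a(n+2) > 1
        have hj1 : 1 ≤ j := by omega
        have h2j : n + 2 = 2 * j := by omega
        have hgt := agt a h1 h2 h3 j hj1
        match m, hm with
        | 1, _ =>
          exfalso; rw [h2j] at heq; rw [heq, h1] at hgt; linarith
        | (m+2), _ =>
          rcases Nat.even_or_odd (m+2) with ⟨k, hk⟩ | ⟨k, hk⟩
          · have hk1 : 1 ≤ k := by omega
            have h2k : m + 2 = 2 * k := by omega
            rw [h2j, h2k, h2 j hj1, h2 k hk1] at heq
            have : a j = a k := by linarith
            have := ih j (by omega) hj1 k hk1 this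
            omega
          · exfalso
            have hk1 : 1 ≤ k := by omega
            have := alt a h1 h2 h3 k hk1
            rw [← hk, ← heq, h2j] at this; linarith
      · -- n+2 = 2j+1, a(n+2) < 1
        have hj1 : 1 ≤ j := by omega
        have hlt := alt a h1 h2 h3 j hj1
        match m, hm with
        | 1, _ =>
          exfalso; rw [hj] at heq; rw [heq, h1] at hlt; linarith
        | (m+2), _ =>
          rcases Nat.even_or_odd (m+2) with ⟨k, hk⟩ | ⟨k, hk⟩
          · exfalso
            have hk1 : 1 ≤ k := by omega
            have h2k : m + 2 = 2 * k := by omega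
            have := agt a h1 h2 h3 k hk1
            rw [← h2k, ← heq, hj] at this; linarith
          · have hk1 : 1 ≤ k := by omega
            rw [hj, hk, h3 j hj1, h3 k hk1] at heq
            have hgj := agt a h1 h2 h3 j hj1
            have hgk := agt a h1 h2 h3 k hk1
            have : a (2 * j) = a (2 * k) := by
              field_simp at heq
              linarith [heq]
            rw [h2 j hj1, h2 k hk1] at this
            have : a j = a k := by linarith
            have := ih j (by omega) hj1 k hk1 this
            omega

include h1 h2 h3 in
lemma asurj_aux : ∀ s : ℕ, ∀ p r : ℕ, p + r = s → 0 < p → 0 < r →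
    ∃ n, 1 ≤ n ∧ a n = (p : ℚ) / r := by
  intro s
  induction s using Nat.strong_induction_on with
  | _ s ih =>
    intro p r hs hp hr
    have hrQ : (r : ℚ) ≠ 0 := by positivity
    have hpQ : (p : ℚ) ≠ 0 := by positivity
    rcases lt_trichotomy p r with h | h | h
    · -- p < r : use a(2n+1)
      obtain ⟨n, hn1, hna⟩ := ih r (by omega) (r - p) p (by omega) (by omega) hp
      have hcast : ((r - p : ℕ) : ℚ) = (r : ℚ) - p := by
        push_cast [Nat.cast_sub h.le]; ring
      refine ⟨2 * n + 1, by omega, ?_⟩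
      rw [h3 n hn1, h2 n hn1, hna, hcast]
      field_simp
      rw [sub_add_cancel, div_self hrQ]
    · refine ⟨1, le_refl 1, ?_⟩
      rw [h1, h]
      rw [div_self hrQ]
    · -- r < p : use a(2n)
      obtain ⟨n, hn1, hna⟩ := ih p (by omega) (p - r) r (by omega) (by omega) hr
      have hcast : ((p - r : ℕ) : ℚ) = (p : ℚ) - r := by
        push_cast [Nat.cast_sub h.le]; ring
      refine ⟨2 * n, by omega, ?_⟩
      rw [h2 n hn1, hna, hcast]
      field_simp
      ring

include h1 h2 h3 in
lemma asurj : ∀ q : ℚ, 0 < q → ∃ n, 1 ≤ n ∧ a n = q := by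
  intro q hq
  have hnum : 0 < q.num := Rat.num_pos.mpr hq
  obtain ⟨n, hn1, hna⟩ := asurj_aux a h1 h2 h3 (q.num.toNat + q.den)
      q.num.toNat q.den rfl (by omega) q.pos
  refine ⟨n, hn1, ?_⟩
  rw [hna]
  rw [show ((q.num.toNat : ℚ)) = (q.num : ℚ) by exact_mod_cast congrArg Int.cast (Int.toNat_of_nonneg hnum.le)]
  exact Rat.num_div_den q
end

theorem stmt17 (a : ℕ → ℚ) (h1 : a 1 = 1)
    (h2 : ∀ n : ℕ, 1 ≤ n → a (2 * n) = a n + 1)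
    (h3 : ∀ n : ℕ, 1 ≤ n → a (2 * n + 1) = 1 / a (2 * n)) :
    Set.Countable {q : ℚ | 0 < q} ∧ Set.Infinite {q : ℚ | 0 < q} ∧
      Set.BijOn a {n : ℕ | 1 ≤ n} {q : ℚ | 0 < q} := by
  have hbij : Set.BijOn a {n : ℕ | 1 ≤ n} {q : ℚ | 0 < q} := by
    refine ⟨fun n hn => apos a h1 h2 h3 n hn, fun n hn m hm heq => ainj a h1 h2 h3 n hn m hm heq, fun q hq => ?_⟩
    obtain ⟨n, hn1, hna⟩ := asurj a h1 h2 h3 q hq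
    exact ⟨n, hn1, hna⟩
  refine ⟨Set.to_countable _, ?_, hbij⟩
  have hs : Set.Infinite {n : ℕ | 1 ≤ n} := by
    have : {n : ℕ | 1 ≤ n} = Set.Ici 1 := rfl
    rw [this]; exact Set.Ici_infinite 1
  exact Set.infinite_of_injOn_mapsTo hbij.injOn hbij.mapsTo hs
end
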